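/- Combining the two bounds: under the setting of Proposition 2, if $\sigma_{\max}(B_S - B_T) \le \epsilon$, then $\sqrt{L(v_{lp}^\infty)} \le \epsilon \|w_\star\|_2 \left(1 + \frac{\sigma_{\max}(B_T)^2 \sigma_{\max}(X)^2}{\sigma_{\min}(X B_T^\top)^2}\right)$. -/

import Mathlib

open Matrix

/-- The largest singular value (operator 2-norm) of a real matrix. -/
noncomputable def sigmaMax {a b : ℕ} (M : Matrix (Fin a) (Fin b) ℝ) : ℝ :=
  ‖LinearMap.toContinuousLinearMap (Matrix.toEuclideanLin M)‖

/-- The smallest singular value of a real matrix: the infimum of `‖M v‖` over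
unit vectors `v`. -/
noncomputable def sigmaMin {a b : ℕ} (M : Matrix (Fin a) (Fin b) ℝ) : ℝ :=
  ⨅ v : {v : EuclideanSpace ℝ (Fin b) // ‖v‖ = 1}, ‖Matrix.toEuclideanLin M v‖

open scoped RealInnerProductSpace

lemma euc_mul {a b c : ℕ} (M : Matrix (Fin a) (Fin b) ℝ) (N : Matrix (Fin b) (Fin c) ℝ)
    (v : EuclideanSpace ℝ (Fin c)) :
    Matrix.toEuclideanLin (M * N) v = Matrix.toEuclideanLin M (Matrix.toEuclideanLin N v) := by
  simp [Matrix.toEuclideanLin_apply, Matrix.mulVec_mulVec]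

lemma euc_one {a : ℕ} (v : EuclideanSpace ℝ (Fin a)) :
    Matrix.toEuclideanLin (1 : Matrix (Fin a) (Fin a) ℝ) v = v := by
  simp [Matrix.toEuclideanLin_apply]

lemma sigmaMax_nonneg {a b : ℕ} (M : Matrix (Fin a) (Fin b) ℝ) : 0 ≤ sigmaMax M :=
  norm_nonneg _

lemma sigmaMax_bound {a b : ℕ} (M : Matrix (Fin a) (Fin b) ℝ) (v : EuclideanSpace ℝ (Fin b)) :
    ‖Matrix.toEuclideanLin M v‖ ≤ sigmaMax M * ‖v‖ := by
  simpa [sigmaMax] using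
    (LinearMap.toContinuousLinearMap (Matrix.toEuclideanLin M)).le_opNorm v

lemma inner_transpose {a b : ℕ} (M : Matrix (Fin a) (Fin b) ℝ)
    (x : EuclideanSpace ℝ (Fin a)) (y : EuclideanSpace ℝ (Fin b)) :
    ⟪Matrix.toEuclideanLin Mᵀ x, y⟫ = ⟪x, Matrix.toEuclideanLin M y⟫ := by
  rw [← Matrix.conjTranspose_eq_transpose_of_trivial,
    Matrix.toEuclideanLin_conjTranspose_eq_adjoint, LinearMap.adjoint_inner_left]

lemma sigmaMax_transpose_bound {a b : ℕ} (M : Matrix (Fin a) (Fin b) ℝ)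
    (v : EuclideanSpace ℝ (Fin a)) :
    ‖Matrix.toEuclideanLin Mᵀ v‖ ≤ sigmaMax M * ‖v‖ := by
  set u := Matrix.toEuclideanLin Mᵀ v with hu
  rcases eq_or_lt_of_le (norm_nonneg u) with h0 | h0
  · rw [← h0]; exact mul_nonneg (sigmaMax_nonneg M) (norm_nonneg v)
  · have h : ‖u‖ * ‖u‖ ≤ (sigmaMax M * ‖v‖) * ‖u‖ := by
      calc ‖u‖ * ‖u‖ = ⟪u, u⟫ := (real_inner_self_eq_norm_mul_norm u).symm
        _ = ⟪v, Matrix.toEuclideanLin M u⟫ := by rw [hu, inner_transpose]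
        _ ≤ ‖v‖ * ‖Matrix.toEuclideanLin M u‖ := real_inner_le_norm _ _
        _ ≤ ‖v‖ * (sigmaMax M * ‖u‖) :=
            mul_le_mul_of_nonneg_left (sigmaMax_bound M u) (norm_nonneg v)
        _ = (sigmaMax M * ‖v‖) * ‖u‖ := by ring
    exact le_of_mul_le_mul_right h h0

lemma sigmaMin_le_norm {a b : ℕ}
    [Nonempty {v : EuclideanSpace ℝ (Fin b) // ‖v‖ = 1}]
    (A : Matrix (Fin a) (Fin b) ℝ) (w : EuclideanSpace ℝ (Fin b)) :
    sigmaMin A * ‖w‖ ≤ ‖Matrix.toEuclideanLin A w‖ := by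
  rcases eq_or_ne w 0 with rfl | hw
  · simp
  · have hn : (0:ℝ) < ‖w‖ := norm_pos_iff.2 hw
    have hu : ‖(‖w‖⁻¹ • w : EuclideanSpace ℝ (Fin b))‖ = 1 := by
      rw [norm_smul, norm_inv, norm_norm]
      field_simp
    have hb : BddBelow (Set.range fun v : {v : EuclideanSpace ℝ (Fin b) // ‖v‖ = 1} =>
        ‖Matrix.toEuclideanLin A v‖) := ⟨0, by rintro x ⟨v, rfl⟩; exact norm_nonneg _⟩
    have h1 : sigmaMin A ≤ ‖Matrix.toEuclideanLin A (‖w‖⁻¹ • w)‖ :=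
      ciInf_le hb (⟨_, hu⟩ : {v : EuclideanSpace ℝ (Fin b) // ‖v‖ = 1})
    have h2 : ‖Matrix.toEuclideanLin A (‖w‖⁻¹ • w)‖ = ‖w‖⁻¹ * ‖Matrix.toEuclideanLin A w‖ := by
      rw [_root_.map_smul, norm_smul, norm_inv, norm_norm]
    rw [h2] at h1
    calc sigmaMin A * ‖w‖ ≤ (‖w‖⁻¹ * ‖Matrix.toEuclideanLin A w‖) * ‖w‖ :=
          mul_le_mul_of_nonneg_right h1 hn.le
      _ = ‖Matrix.toEuclideanLin A w‖ := by field_simp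

lemma inv_arith (σm ny nAy nz : ℝ) (h0 : 0 < ny) (hm : 0 ≤ σm) (hA0 : 0 ≤ nAy)
    (hAy : σm * ny ≤ nAy) (hsq : nAy * nAy ≤ nz * ny) : σm ^ 2 * ny ≤ nz := by
  have h1 : (σm * ny) * (σm * ny) ≤ nAy * nAy :=
    mul_le_mul hAy hAy (mul_nonneg hm h0.le) hA0
  have h2 : σm ^ 2 * ny * ny ≤ nz * ny := by nlinarith
  exact le_of_mul_le_mul_right (by linarith) h0

lemma final_arith (σB σX σm ε W nu t S : ℝ)
    (hB : 0 ≤ σB) (hX : 0 ≤ σX) (hm : 0 < σm ^ 2)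
    (hε : 0 ≤ ε) (hW : 0 ≤ W) (ht : 0 ≤ t) (h0 : 0 ≤ nu)
    (h1 : σm ^ 2 * t ≤ σB * σX * (σX * nu))
    (h2 : nu ≤ ε * W)
    (h3 : S ≤ nu + σB * t) :
    S ≤ ε * W * (1 + σB ^ 2 * σX ^ 2 / σm ^ 2) := by
  have hc : σB * t ≤ σB ^ 2 * σX ^ 2 * nu / σm ^ 2 := by
    rw [le_div_iff₀ hm]
    nlinarith [mul_le_mul_of_nonneg_left h1 hB]
  have hstep : σB ^ 2 * σX ^ 2 * nu / σm ^ 2 ≤ σB ^ 2 * σX ^ 2 * (ε * W) / σm ^ 2 :=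
    div_le_div_of_nonneg_right (mul_le_mul_of_nonneg_left h2 (by positivity)) hm.le
  have : S ≤ ε * W + σB ^ 2 * σX ^ 2 * (ε * W) / σm ^ 2 := by linarith
  calc S ≤ ε * W + σB ^ 2 * σX ^ 2 * (ε * W) / σm ^ 2 := this
    _ = ε * W * (1 + σB ^ 2 * σX ^ 2 / σm ^ 2) := by ring

/-- Combined bound of Proposition 2: if `σ_max(B_S - B_T) ≤ ε` then the square
root of the fine-tuned linear-probe loss is bounded by
`ε ‖w⋆‖ (1 + σ_max(B_T)² σ_max(X)² / σ_min(X B_Tᵀ)²)`. -/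
theorem stmt_11 {k d m : ℕ} (BS BT : Matrix (Fin k) (Fin d) ℝ)
    (X : Matrix (Fin m) (Fin d) ℝ) (vS : EuclideanSpace ℝ (Fin k)) (ε : ℝ)
    (hBS : BS * BSᵀ = 1)
    [Invertible (BT * (Xᵀ * X) * BTᵀ)]
    (hXBT : 0 < sigmaMin (X * BTᵀ))
    (hshift : sigmaMax (BS - BT) ≤ ε) :
    ‖Matrix.toEuclideanLin BSᵀ vS -
        Matrix.toEuclideanLin BTᵀ
          (Matrix.toEuclideanLin
            ((BT * (Xᵀ * X) * BTᵀ)⁻¹ * BT * (Xᵀ * X) * BSᵀ) vS)‖ ≤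
      ε * ‖Matrix.toEuclideanLin BSᵀ vS‖ *
        (1 + sigmaMax BT ^ 2 * sigmaMax X ^ 2 / sigmaMin (X * BTᵀ) ^ 2) := by
  have hne : Nonempty {v : EuclideanSpace ℝ (Fin k) // ‖v‖ = 1} := by
    by_contra h
    rw [not_nonempty_iff] at h
    have h0 : sigmaMin (X * BTᵀ) = 0 := Real.iInf_of_isEmpty _
    rw [h0] at hXBT; exact lt_irrefl _ hXBT
  set G := BT * (Xᵀ * X) * BTᵀ with hGdef
  set u := Matrix.toEuclideanLin (BTᵀ - BSᵀ) vS with hudef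
  -- matrix identities
  have hGA : G = (X * BTᵀ)ᵀ * (X * BTᵀ) := by
    rw [hGdef, Matrix.transpose_mul, Matrix.transpose_transpose]
    simp [Matrix.mul_assoc]
  have hGinv : G⁻¹ * ((BT * Xᵀ) * (X * BTᵀ)) = 1 := by
    rw [show (BT * Xᵀ) * (X * BTᵀ) = G by rw [hGdef]; simp [Matrix.mul_assoc]]
    exact Matrix.inv_mul_of_invertible _
  have key : BSᵀ - BTᵀ * (G⁻¹ * BT * (Xᵀ * X) * BSᵀ)
      = -(BTᵀ - BSᵀ) + BTᵀ * (G⁻¹ * ((BT * Xᵀ) * (X * (BTᵀ - BSᵀ)))) := by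
    rw [Matrix.mul_sub X, Matrix.mul_sub (BT * Xᵀ), Matrix.mul_sub G⁻¹, hGinv,
      Matrix.mul_sub BTᵀ, Matrix.mul_one,
      show G⁻¹ * BT * (Xᵀ * X) * BSᵀ = G⁻¹ * ((BT * Xᵀ) * (X * BSᵀ)) by
        simp [Matrix.mul_assoc]]
    abel
  -- vector identity
  have hvec : Matrix.toEuclideanLin BSᵀ vS -
        Matrix.toEuclideanLin BTᵀ
          (Matrix.toEuclideanLin (G⁻¹ * BT * (Xᵀ * X) * BSᵀ) vS)
      = -u + Matrix.toEuclideanLin BTᵀ (Matrix.toEuclideanLin G⁻¹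
          (Matrix.toEuclideanLin (BT * Xᵀ) (Matrix.toEuclideanLin X u))) := by
    calc Matrix.toEuclideanLin BSᵀ vS -
          Matrix.toEuclideanLin BTᵀ
            (Matrix.toEuclideanLin (G⁻¹ * BT * (Xᵀ * X) * BSᵀ) vS)
        = Matrix.toEuclideanLin (BSᵀ - BTᵀ * (G⁻¹ * BT * (Xᵀ * X) * BSᵀ)) vS := by
          rw [map_sub, LinearMap.sub_apply,
            euc_mul BTᵀ (G⁻¹ * BT * (Xᵀ * X) * BSᵀ) vS]
      _ = Matrix.toEuclideanLin (-(BTᵀ - BSᵀ)) vS +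
            Matrix.toEuclideanLin (BTᵀ * (G⁻¹ * ((BT * Xᵀ) * (X * (BTᵀ - BSᵀ))))) vS := by
          rw [key, map_add, LinearMap.add_apply]
      _ = -u + Matrix.toEuclideanLin BTᵀ (Matrix.toEuclideanLin G⁻¹
            (Matrix.toEuclideanLin (BT * Xᵀ) (Matrix.toEuclideanLin X u))) := by
          rw [map_neg, LinearMap.neg_apply,
            euc_mul BTᵀ (G⁻¹ * ((BT * Xᵀ) * (X * (BTᵀ - BSᵀ)))) vS,
            euc_mul G⁻¹ ((BT * Xᵀ) * (X * (BTᵀ - BSᵀ))) vS,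
            euc_mul (BT * Xᵀ) (X * (BTᵀ - BSᵀ)) vS,
            euc_mul X (BTᵀ - BSᵀ) vS, hudef]
  -- norms
  have hε : 0 ≤ ε := le_trans (sigmaMax_nonneg _) hshift
  have hBTn := sigmaMax_nonneg BT
  have hXn := sigmaMax_nonneg X
  have hu : ‖u‖ ≤ ε * ‖vS‖ := by
    have h1 : u = - Matrix.toEuclideanLin (BS - BT)ᵀ vS := by
      rw [hudef, show (BS - BT)ᵀ = -(BTᵀ - BSᵀ) by rw [Matrix.transpose_sub]; abel,
        map_neg, LinearMap.neg_apply, neg_neg]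
    rw [h1, norm_neg]
    exact le_trans (sigmaMax_transpose_bound _ _)
      (mul_le_mul_of_nonneg_right hshift (norm_nonneg _))
  have hvnorm : ‖vS‖ = ‖Matrix.toEuclideanLin BSᵀ vS‖ := by
    have h2 : ‖Matrix.toEuclideanLin BSᵀ vS‖ * ‖Matrix.toEuclideanLin BSᵀ vS‖
        = ‖vS‖ * ‖vS‖ := by
      rw [← real_inner_self_eq_norm_mul_norm, ← real_inner_self_eq_norm_mul_norm]
      calc ⟪Matrix.toEuclideanLin BSᵀ vS, Matrix.toEuclideanLin BSᵀ vS⟫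
          = ⟪vS, Matrix.toEuclideanLin BS (Matrix.toEuclideanLin BSᵀ vS)⟫ :=
            inner_transpose BS vS _
        _ = ⟪vS, Matrix.toEuclideanLin (BS * BSᵀ) vS⟫ := by rw [euc_mul]
        _ = ⟪vS, vS⟫ := by rw [hBS, euc_one]
    have h3 := congrArg Real.sqrt h2
    rw [Real.sqrt_mul_self (norm_nonneg _), Real.sqrt_mul_self (norm_nonneg _)] at h3
    exact h3.symm
  have hs2 : (0:ℝ) < sigmaMin (X * BTᵀ) ^ 2 := pow_pos hXBT 2
  -- inverse bound
  have hinvb : ∀ z : EuclideanSpace ℝ (Fin k),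
      sigmaMin (X * BTᵀ) ^ 2 * ‖Matrix.toEuclideanLin G⁻¹ z‖ ≤ ‖z‖ := by
    intro z
    set y := Matrix.toEuclideanLin G⁻¹ z with hy
    have hGy : Matrix.toEuclideanLin G y = z := by
      rw [hy, ← euc_mul, Matrix.mul_inv_of_invertible, euc_one]
    rcases eq_or_lt_of_le (norm_nonneg y) with h0 | h0
    · rw [← h0, mul_zero]; exact norm_nonneg z
    · have hAy : sigmaMin (X * BTᵀ) * ‖y‖ ≤ ‖Matrix.toEuclideanLin (X * BTᵀ) y‖ :=
        sigmaMin_le_norm (X * BTᵀ) y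
      have hsq : ‖Matrix.toEuclideanLin (X * BTᵀ) y‖ * ‖Matrix.toEuclideanLin (X * BTᵀ) y‖
          ≤ ‖z‖ * ‖y‖ := by
        calc ‖Matrix.toEuclideanLin (X * BTᵀ) y‖ * ‖Matrix.toEuclideanLin (X * BTᵀ) y‖
            = ⟪Matrix.toEuclideanLin (X * BTᵀ) y, Matrix.toEuclideanLin (X * BTᵀ) y⟫ :=
              (real_inner_self_eq_norm_mul_norm _).symm
          _ = ⟪Matrix.toEuclideanLin (X * BTᵀ)ᵀ (Matrix.toEuclideanLin (X * BTᵀ) y), y⟫ :=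
              (inner_transpose (X * BTᵀ) _ y).symm
          _ = ⟪Matrix.toEuclideanLin G y, y⟫ := by rw [← euc_mul, ← hGA]
          _ ≤ ‖Matrix.toEuclideanLin G y‖ * ‖y‖ := real_inner_le_norm _ _
          _ = ‖z‖ * ‖y‖ := by rw [hGy]
      exact inv_arith _ _ _ _ h0 hXBT.le (norm_nonneg _) hAy hsq
  -- assemble
  rw [hvec]
  set N1 := Matrix.toEuclideanLin X u with hN1
  set N2 := Matrix.toEuclideanLin (BT * Xᵀ) N1 with hN2
  set t := ‖Matrix.toEuclideanLin G⁻¹ N2‖ with hT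
  have ht : (0:ℝ) ≤ t := norm_nonneg _
  have hb1 : ‖N1‖ ≤ sigmaMax X * ‖u‖ := sigmaMax_bound X u
  have hb2 : ‖N2‖ ≤ sigmaMax BT * (sigmaMax X * ‖N1‖) := by
    rw [hN2, euc_mul]
    calc ‖Matrix.toEuclideanLin BT (Matrix.toEuclideanLin Xᵀ N1)‖
        ≤ sigmaMax BT * ‖Matrix.toEuclideanLin Xᵀ N1‖ := by
          have := sigmaMax_bound BT (Matrix.toEuclideanLin Xᵀ N1)
          -- need transpose: BT is not transposed here; toEuclideanLin BT direct
          exact this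
      _ ≤ sigmaMax BT * (sigmaMax X * ‖N1‖) :=
          mul_le_mul_of_nonneg_left (sigmaMax_transpose_bound X N1) hBTn
  have hb3 : sigmaMin (X * BTᵀ) ^ 2 * t ≤ ‖N2‖ := hinvb N2
  have hb4 : ‖Matrix.toEuclideanLin BTᵀ (Matrix.toEuclideanLin G⁻¹ N2)‖
      ≤ sigmaMax BT * t := sigmaMax_transpose_bound BT _
  have huW : ‖u‖ ≤ ε * ‖Matrix.toEuclideanLin BSᵀ vS‖ := by rw [← hvnorm]; exact hu
  have hW : (0:ℝ) ≤ ‖Matrix.toEuclideanLin BSᵀ vS‖ := norm_nonneg _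
  have hb3' : sigmaMin (X * BTᵀ) ^ 2 * t ≤ sigmaMax BT * sigmaMax X * (sigmaMax X * ‖u‖) := by
    calc sigmaMin (X * BTᵀ) ^ 2 * t ≤ ‖N2‖ := hb3
      _ ≤ sigmaMax BT * (sigmaMax X * ‖N1‖) := hb2
      _ ≤ sigmaMax BT * (sigmaMax X * (sigmaMax X * ‖u‖)) := by
          apply mul_le_mul_of_nonneg_left _ hBTn
          exact mul_le_mul_of_nonneg_left hb1 hXn
      _ = sigmaMax BT * sigmaMax X * (sigmaMax X * ‖u‖) := by ring
  have h3 : ‖-u + Matrix.toEuclideanLin BTᵀ (Matrix.toEuclideanLin G⁻¹ N2)‖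
      ≤ ‖u‖ + sigmaMax BT * t := by
    have hn := norm_add_le (-u) (Matrix.toEuclideanLin BTᵀ (Matrix.toEuclideanLin G⁻¹ N2))
    rw [norm_neg] at hn
    exact hn.trans (add_le_add le_rfl hb4)
  exact final_arith (sigmaMax BT) (sigmaMax X) (sigmaMin (X * BTᵀ)) ε
    ‖Matrix.toEuclideanLin BSᵀ vS‖ ‖u‖ t _ hBTn hXn hs2 hε hW ht (norm_nonneg u)
    hb3' huW h3
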